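/- For r ≥ 1 factors all equal to C_2, src(C_2 □ ⋯ □ C_2) = r, i.e., the strong rainbow connection number of the r-dimensional hypercube Q_r equals r. -/
import Mathlib


open SimpleGraph Finset

/-- A coloring `c` of (potential) edges is a rainbow coloring of `G` if every pair of
distinct vertices is joined by a path whose edges have pairwise distinct colors. -/
def SimpleGraph.IsRainbowColoring {V α : Type*} (G : SimpleGraph V) (c : Sym2 V → α) : Prop :=
  ∀ u v : V, u ≠ v → ∃ p : G.Walk u v, p.IsPath ∧ (p.edges.map c).Nodup

/-- A strong rainbow coloring: every pair of distinct vertices is joined by a rainbow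
path whose length equals the distance between them. -/
def SimpleGraph.IsStrongRainbowColoring {V α : Type*} (G : SimpleGraph V) (c : Sym2 V → α) : Prop :=
  ∀ u v : V, u ≠ v → ∃ p : G.Walk u v, p.IsPath ∧ p.length = G.dist u v ∧ (p.edges.map c).Nodup

/-- The rainbow connection number: least number of colors of a rainbow coloring. -/
noncomputable def SimpleGraph.rc {V : Type*} (G : SimpleGraph V) : ℕ :=
  sInf {k : ℕ | ∃ c : Sym2 V → Fin k, G.IsRainbowColoring c}

/-- The strong rainbow connection number: least number of colors of a strong rainbow coloring. -/
noncomputable def SimpleGraph.src {V : Type*} (G : SimpleGraph V) : ℕ :=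
  sInf {k : ℕ | ∃ c : Sym2 V → Fin k, G.IsStrongRainbowColoring c}

/-- The toroidal mesh `C_{n 0} □ ⋯ □ C_{n (r-1)}`: the Cartesian (box) product of the
cycles `cycleGraph (n i)`. -/
def toroidalMesh {r : ℕ} (n : Fin r → ℕ) : SimpleGraph (∀ i, Fin (n i)) :=
  SimpleGraph.fromRel fun u v =>
    ∃ i, (cycleGraph (n i)).Adj (u i) (v i) ∧ ∀ j, j ≠ i → u j = v j

namespace HyperAux

variable {r : ℕ}

/-- The hypercube. -/
abbrev Q (r : ℕ) : SimpleGraph (Fin r → Fin 2) := toroidalMesh (fun _ : Fin r => 2)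

/-- The set of coordinates where `u` and `v` differ. -/
def D (u v : Fin r → Fin 2) : Finset (Fin r) := Finset.univ.filter (fun i => u i ≠ v i)

lemma mem_D {u v : Fin r → Fin 2} {i : Fin r} : i ∈ D u v ↔ u i ≠ v i := by
  simp [D]

lemma D_comm (u v : Fin r → Fin 2) : D u v = D v u := by
  ext i; simp [mem_D, ne_comm]

lemma D_eq_empty {u v : Fin r → Fin 2} : D u v = ∅ ↔ u = v := by
  constructor
  · intro h
    funext i
    by_contra hi
    exact (Finset.eq_empty_iff_forall_notMem.mp h i) (mem_D.mpr hi)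
  · rintro rfl
    exact Finset.eq_empty_iff_forall_notMem.mpr fun i hi => (mem_D.mp hi) rfl

lemma adj_iff {u v : Fin r → Fin 2} :
    (Q r).Adj u v ↔ ∃ i, u i ≠ v i ∧ ∀ j, j ≠ i → u j = v j := by
  constructor
  · intro h
    simp only [Q, toroidalMesh, fromRel_adj] at h
    obtain ⟨hne, h | h⟩ := h
    · obtain ⟨i, hi, hj⟩ := h
      rw [cycleGraph_two_eq_top, top_adj] at hi
      exact ⟨i, hi, hj⟩
    · obtain ⟨i, hi, hj⟩ := h
      rw [cycleGraph_two_eq_top, top_adj] at hi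
      exact ⟨i, hi.symm, fun j hjne => (hj j hjne).symm⟩
  · rintro ⟨i, hi, hj⟩
    simp only [Q, toroidalMesh, fromRel_adj]
    refine ⟨fun h => hi (congrFun h i), Or.inl ⟨i, ?_, hj⟩⟩
    rw [cycleGraph_two_eq_top, top_adj]
    exact hi

lemma D_of_adj {u v : Fin r → Fin 2} {i : Fin r} (hi : u i ≠ v i)
    (hj : ∀ j, j ≠ i → u j = v j) : D u v = {i} := by
  ext j
  simp only [mem_D, Finset.mem_singleton]
  constructor
  · intro hne
    by_contra hji
    exact hne (hj j hji)
  · rintro rfl; exact hi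

/-- The coordinate coloring: an actual edge of the hypercube gets the unique coordinate
where its endpoints differ. -/
noncomputable def col (hr : 1 ≤ r) : Sym2 (Fin r → Fin 2) → Fin r :=
  Sym2.lift ⟨fun u v => if h : (D u v).Nonempty then (D u v).min' h else ⟨0, hr⟩,
    fun u v => by simp only [D_comm u v]⟩

lemma col_edge (hr : 1 ≤ r) {u v : Fin r → Fin 2} {i : Fin r} (hi : u i ≠ v i)
    (hj : ∀ j, j ≠ i → u j = v j) : col hr s(u, v) = i := by
  have hD : D u v = {i} := D_of_adj hi hj
  have hne : (D u v).Nonempty := by rw [hD]; exact Finset.singleton_nonempty i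
  simp only [col, Sym2.lift_mk, dif_pos hne]
  simp [hD]

lemma exists_path (hr : 1 ≤ r) : ∀ (n : ℕ) (u v : Fin r → Fin 2), (D u v).card = n →
    ∃ p : (Q r).Walk u v, p.IsPath ∧ p.length = n ∧ (p.edges.map (col hr)).Nodup ∧
      (∀ x ∈ p.edges.map (col hr), x ∈ D u v) ∧
      (∀ w ∈ p.support, ∀ j, j ∉ D u v → w j = v j) := by
  intro n
  induction n with
  | zero =>
    intro u v h
    have huv : u = v := D_eq_empty.mp (Finset.card_eq_zero.mp h)
    subst huv
    refine ⟨SimpleGraph.Walk.nil, SimpleGraph.Walk.IsPath.nil, rfl, by simp, by simp, ?_⟩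
    intro w hw j _
    rw [SimpleGraph.Walk.mem_support_nil_iff.mp hw]
  | succ n ih =>
    intro u v h
    have hne : (D u v).Nonempty := Finset.card_pos.mp (by omega)
    obtain ⟨i, hi⟩ := hne
    have hiuv : u i ≠ v i := mem_D.mp hi
    set u' : Fin r → Fin 2 := Function.update u i (v i) with hu'
    have hu'i : u' i = v i := Function.update_self i (v i) u
    have hu'j : ∀ j, j ≠ i → u' j = u j := fun j hj => Function.update_of_ne hj (v i) u
    have hadj : (Q r).Adj u u' := by
      refine adj_iff.mpr ⟨i, by rw [hu'i]; exact hiuv, fun j hj => (hu'j j hj).symm⟩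
    have hD' : D u' v = (D u v).erase i := by
      ext j
      by_cases hj : j = i
      · subst hj
        simp [mem_D, hu'i]
      · simp [mem_D, hj, hu'j j hj]
    have hcard : (D u' v).card = n := by
      rw [hD', Finset.card_erase_of_mem hi, h]; omega
    obtain ⟨p, hp, hlen, hnd, hmem, hsup⟩ := ih u' v hcard
    have hcol : col hr s(u, u') = i := by
      refine col_edge hr (by rw [hu'i]; exact hiuv) (fun j hj => (hu'j j hj).symm)
    have hu_not : u ∉ p.support := by
      intro hmem'
      have := hsup u hmem' i (by rw [hD']; exact Finset.notMem_erase i _)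
      exact hiuv this
    refine ⟨SimpleGraph.Walk.cons hadj p, ?_, ?_, ?_, ?_, ?_⟩
    · exact hp.cons hu_not
    · simp [hlen]
    · rw [SimpleGraph.Walk.edges_cons, List.map_cons, hcol, List.nodup_cons]
      refine ⟨fun hmem' => ?_, hnd⟩
      have := hmem i hmem'
      rw [hD'] at this
      exact Finset.notMem_erase i _ this
    · intro x hx
      rw [SimpleGraph.Walk.edges_cons, List.map_cons, hcol, List.mem_cons] at hx
      rcases hx with rfl | hx
      · exact hi
      · exact Finset.erase_subset i _ (hD' ▸ hmem x hx)
    · intro w hw j hj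
      rw [SimpleGraph.Walk.support_cons, List.mem_cons] at hw
      rcases hw with rfl | hw
      · exact not_not.mp (fun hne => hj (mem_D.mpr hne))
      · refine hsup w hw j ?_
        rw [hD']
        intro hmem'
        exact hj (Finset.mem_of_mem_erase hmem')

lemma card_le_length : ∀ {u v : Fin r → Fin 2} (p : (Q r).Walk u v),
    (D u v).card ≤ p.length := by
  intro u v p
  induction p with
  | nil => simp [D_eq_empty.mpr rfl]
  | @cons u w v h p ih =>
    obtain ⟨i, hi, hj⟩ := adj_iff.mp h
    have hsub : D u v ⊆ insert i (D w v) := by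
      intro j hjm
      by_cases hji : j = i
      · subst hji; exact Finset.mem_insert_self j _
      · refine Finset.mem_insert_of_mem (mem_D.mpr ?_)
        rw [← hj j hji]
        exact mem_D.mp hjm
    calc (D u v).card ≤ (insert i (D w v)).card := Finset.card_le_card hsub
      _ ≤ (D w v).card + 1 := Finset.card_insert_le _ _
      _ ≤ p.length + 1 := by omega
      _ = (SimpleGraph.Walk.cons h p).length := (SimpleGraph.Walk.length_cons h p).symm

lemma dist_eq (hr : 1 ≤ r) (u v : Fin r → Fin 2) : (Q r).dist u v = (D u v).card := by
  obtain ⟨p, _, hlen, _, _, _⟩ := exists_path hr _ u v rfl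
  refine le_antisymm (hlen ▸ SimpleGraph.dist_le p) ?_
  obtain ⟨q, hq⟩ := SimpleGraph.Reachable.exists_walk_length_eq_dist ⟨p⟩
  exact hq ▸ card_le_length q

lemma isStrong (hr : 1 ≤ r) : (Q r).IsStrongRainbowColoring (col hr) := by
  intro u v _
  obtain ⟨p, hp, hlen, hnd, _, _⟩ := exists_path hr _ u v rfl
  exact ⟨p, hp, by rw [hlen, dist_eq hr], hnd⟩

end HyperAux

theorem stmt_14 (r : ℕ) (hr : 1 ≤ r) :
    (toroidalMesh (fun _ : Fin r => 2)).src = r := by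
  apply le_antisymm
  · exact Nat.sInf_le ⟨HyperAux.col hr, HyperAux.isStrong hr⟩
  · refine le_csInf ⟨r, HyperAux.col hr, HyperAux.isStrong hr⟩ ?_
    rintro k ⟨c, hc⟩
    set u : Fin r → Fin 2 := fun _ => 0 with hu
    set v : Fin r → Fin 2 := fun _ => 1 with hv
    have huv : u ≠ v := by
      intro h
      have := congrFun h ⟨0, hr⟩
      simp [hu, hv] at this
    obtain ⟨p, _, hlen, hnd⟩ := hc u v huv
    have hD : HyperAux.D u v = Finset.univ := by
      ext i
      simp [HyperAux.mem_D, hu, hv]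
    have hdist : (toroidalMesh (fun _ : Fin r => 2)).dist u v = r := by
      rw [HyperAux.dist_eq hr, hD, Finset.card_univ, Fintype.card_fin]
    have h1 : (p.edges.map c).length = r := by
      rw [List.length_map, SimpleGraph.Walk.length_edges, hlen, hdist]
    have h2 := hnd.length_le_card
    rw [h1, Fintype.card_fin] at h2
    exact h2
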